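/- In any (m,n) secret sharing scheme for a secret W uniformly distributed over an alphabet of size |W|, where any m shares reveal no information about W and all n shares determine W, each share must have entropy at least log|W|/(n-m), i.e., log|S| ≥ log|W|/(n-m) where S is the alphabet of each share. -/

import Mathlib

open scoped BigOperators

/-- Probability that random variable `X` takes value `x`, on a finite
probability space with mass function `p`. -/
noncomputable def probOf {Ω α : Type*} [Fintype Ω] [DecidableEq α]
    (p : Ω → ℝ) (X : Ω → α) (x : α) : ℝ :=
  ∑ ω, if X ω = x then p ω else 0

/-- Shannon entropy (in bits) of a random variable on a finite probability space. -/
noncomputable def entropy {Ω α : Type*} [Fintype Ω] [Fintype α] [DecidableEq α]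
    (p : Ω → ℝ) (X : Ω → α) : ℝ :=
  -∑ x, probOf p X x * Real.logb 2 (probOf p X x)

/-- Conditional entropy H(X | Y). -/
noncomputable def condEntropy {Ω α β : Type*} [Fintype Ω] [Fintype α] [DecidableEq α]
    [Fintype β] [DecidableEq β] (p : Ω → ℝ) (X : Ω → α) (Y : Ω → β) : ℝ :=
  entropy p (fun ω => (X ω, Y ω)) - entropy p Y

/-- Mutual information I(X ; Y). -/
noncomputable def mutualInfo {Ω α β : Type*} [Fintype Ω] [Fintype α] [DecidableEq α]
    [Fintype β] [DecidableEq β] (p : Ω → ℝ) (X : Ω → α) (Y : Ω → β) : ℝ :=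
  entropy p X - condEntropy p X Y

section Aux

variable {Ω α β : Type*} [Fintype Ω] [Fintype α] [DecidableEq α] [Fintype β] [DecidableEq β]

lemma probOf_nonneg (p : Ω → ℝ) (hp0 : ∀ ω, 0 ≤ p ω) (X : Ω → α) (x : α) :
    0 ≤ probOf p X x :=
  Finset.sum_nonneg fun ω _ => by by_cases h : X ω = x <;> simp [h, hp0 ω]

lemma sum_probOf (p : Ω → ℝ) (hp1 : ∑ ω, p ω = 1) (X : Ω → α) :
    ∑ x, probOf p X x = 1 := by
  unfold probOf
  rw [Finset.sum_comm]
  simpa [Finset.sum_ite_eq] using hp1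

lemma probOf_fst (p : Ω → ℝ) (X : Ω → α) (Y : Ω → β) (x : α) :
    probOf p X x = ∑ y, probOf p (fun ω => (X ω, Y ω)) (x, y) := by
  unfold probOf
  rw [Finset.sum_comm]
  refine Finset.sum_congr rfl fun ω _ => ?_
  simp [Prod.ext_iff, ite_and, Finset.sum_ite_eq]

lemma probOf_snd (p : Ω → ℝ) (X : Ω → α) (Y : Ω → β) (y : β) :
    probOf p Y y = ∑ x, probOf p (fun ω => (X ω, Y ω)) (x, y) := by
  unfold probOf
  rw [Finset.sum_comm]
  refine Finset.sum_congr rfl fun ω _ => ?_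
  simp [Prod.ext_iff, ite_and, Finset.sum_ite_eq]

lemma concave_logb : ConcaveOn ℝ (Set.Ioi 0) (Real.logb 2) := by
  have h := (strictConcaveOn_log_Ioi.concaveOn).smul
    (c := (Real.log 2)⁻¹) (by positivity)
  have e : Real.logb 2 = fun x => (Real.log 2)⁻¹ • Real.log x := by
    funext x
    simp [Real.logb, div_eq_inv_mul]
  rw [e]; exact h

/-- Gibbs' inequality. -/
lemma gibbs (q r : α → ℝ) (hq0 : ∀ i, 0 ≤ q i) (hr0 : ∀ i, 0 ≤ r i)
    (hq1 : ∑ i, q i = 1) (hr1 : ∑ i, r i ≤ 1) (habs : ∀ i, r i = 0 → q i = 0) :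
    ∑ i, q i * Real.logb 2 (r i) ≤ ∑ i, q i * Real.logb 2 (q i) := by
  classical
  set t : Finset α := Finset.univ.filter fun i => q i ≠ 0 with ht
  have hmem : ∀ i ∈ t, 0 < q i := by
    intro i hi
    simp only [ht, Finset.mem_filter, Finset.mem_univ, true_and] at hi
    exact (hq0 i).lt_of_ne' hi
  have hrpos : ∀ i ∈ t, 0 < r i := by
    intro i hi
    simp only [ht, Finset.mem_filter, Finset.mem_univ, true_and] at hi
    refine (hr0 i).lt_of_ne' fun h => hi (habs i h)
  have hzero : ∀ i ∉ t, q i = 0 := by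
    intro i hi
    simp only [ht, Finset.mem_filter, Finset.mem_univ, true_and, not_not] at hi
    exact hi
  have hqt : ∑ i ∈ t, q i = 1 := by
    rw [← hq1]
    exact Finset.sum_subset (Finset.subset_univ t) (fun i _ hi => hzero i hi)
  have hL : ∑ i, q i * Real.logb 2 (r i) = ∑ i ∈ t, q i * Real.logb 2 (r i) :=
    (Finset.sum_subset (Finset.subset_univ t)
      (fun i _ hi => by simp [hzero i hi])).symm
  have hR : ∑ i, q i * Real.logb 2 (q i) = ∑ i ∈ t, q i * Real.logb 2 (q i) :=
    (Finset.sum_subset (Finset.subset_univ t)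
      (fun i _ hi => by simp [hzero i hi])).symm
  rw [hL, hR, ← sub_nonpos]
  have hdist : ∑ i ∈ t, q i * Real.logb 2 (r i) - ∑ i ∈ t, q i * Real.logb 2 (q i)
      = ∑ i ∈ t, (q i * Real.logb 2 (r i) - q i * Real.logb 2 (q i)) :=
    (Finset.sum_sub_distrib _ _).symm
  rw [hdist]
  have key : ∑ i ∈ t, q i * (Real.logb 2 (r i / q i)) ≤
      Real.logb 2 (∑ i ∈ t, q i * (r i / q i)) := by
    have := concave_logb.le_map_sum (t := t) (w := q) (p := fun i => r i / q i)
      (fun i hi => (hmem i hi).le) hqt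
      (fun i hi => Set.mem_Ioi.mpr (div_pos (hrpos i hi) (hmem i hi)))
    simpa [smul_eq_mul] using this
  have hsum : ∑ i ∈ t, q i * (r i / q i) = ∑ i ∈ t, r i := by
    refine Finset.sum_congr rfl fun i hi => ?_
    rw [mul_comm, div_mul_cancel₀ _ (hmem i hi).ne']
  refine le_trans ?_ (le_refl (0:ℝ))
  calc ∑ i ∈ t, (q i * Real.logb 2 (r i) - q i * Real.logb 2 (q i))
      = ∑ i ∈ t, q i * Real.logb 2 (r i / q i) := by
        refine Finset.sum_congr rfl fun i hi => ?_
        rw [Real.logb_div (hrpos i hi).ne' (hmem i hi).ne', mul_sub]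
    _ ≤ Real.logb 2 (∑ i ∈ t, q i * (r i / q i)) := key
    _ = Real.logb 2 (∑ i ∈ t, r i) := by rw [hsum]
    _ ≤ 0 := by
        refine Real.logb_nonpos one_lt_two (Finset.sum_nonneg fun i _ => hr0 i) ?_
        calc ∑ i ∈ t, r i ≤ ∑ i, r i :=
              Finset.sum_le_sum_of_subset_of_nonneg (Finset.filter_subset _ _)
                (fun i _ _ => hr0 i)
          _ ≤ 1 := hr1


lemma entropy_le_logb_card (p : Ω → ℝ) (hp0 : ∀ ω, 0 ≤ p ω) (hp1 : ∑ ω, p ω = 1)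
    (X : Ω → α) : entropy p X ≤ Real.logb 2 (Fintype.card α) := by
  have hsum := sum_probOf p hp1 X
  have hcard : 0 < Fintype.card α := by
    by_contra h
    push_neg at h
    interval_cases h' : Fintype.card α
    · have : IsEmpty α := Fintype.card_eq_zero_iff.mp h'
      rw [Finset.sum_of_isEmpty] at hsum
      norm_num at hsum
  have hg := gibbs (probOf p X) (fun _ => (Fintype.card α : ℝ)⁻¹)
    (probOf_nonneg p hp0 X) (fun _ => by positivity) hsum
    (by simp; rw [mul_inv_cancel₀]; positivity)
    (fun i h => absurd h (by positivity))
  have hL : ∑ i, probOf p X i * Real.logb 2 (Fintype.card α : ℝ)⁻¹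
      = -Real.logb 2 (Fintype.card α) := by
    rw [← Finset.sum_mul, hsum, one_mul, Real.logb_inv]
  rw [hL] at hg
  unfold entropy
  linarith

lemma entropy_fst_le (p : Ω → ℝ) (hp0 : ∀ ω, 0 ≤ p ω) (X : Ω → α) (Y : Ω → β) :
    entropy p X ≤ entropy p (fun ω => (X ω, Y ω)) := by
  unfold entropy
  rw [neg_le_neg_iff, Fintype.sum_prod_type]
  have key : ∀ x y, probOf p (fun ω => (X ω, Y ω)) (x, y) *
      Real.logb 2 (probOf p (fun ω => (X ω, Y ω)) (x, y)) ≤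
      probOf p (fun ω => (X ω, Y ω)) (x, y) * Real.logb 2 (probOf p X x) := by
    intro x y
    set r := probOf p (fun ω => (X ω, Y ω)) (x, y) with hr
    rcases eq_or_lt_of_le (probOf_nonneg p hp0 (fun ω => (X ω, Y ω)) (x, y)) with h | h
    · rw [hr, ← h]; simp
    · have hle : r ≤ probOf p X x := by
        rw [probOf_fst p X Y x]
        exact Finset.single_le_sum (fun y _ => probOf_nonneg p hp0 _ (x, y))
          (Finset.mem_univ y)
      exact mul_le_mul_of_nonneg_left
        (Real.logb_le_logb_of_le one_lt_two h hle) h.le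
  calc ∑ x, probOf p X x * Real.logb 2 (probOf p X x)
      = ∑ x, ∑ y, probOf p (fun ω => (X ω, Y ω)) (x, y) * Real.logb 2 (probOf p X x) := by
        refine Finset.sum_congr rfl fun x _ => ?_
        rw [← Finset.sum_mul, ← probOf_fst]
    _ ≥ ∑ x, ∑ y, probOf p (fun ω => (X ω, Y ω)) (x, y) *
          Real.logb 2 (probOf p (fun ω => (X ω, Y ω)) (x, y)) := by
        refine Finset.sum_le_sum fun x _ => Finset.sum_le_sum fun y _ => key x y

lemma entropy_pair_le_add (p : Ω → ℝ) (hp0 : ∀ ω, 0 ≤ p ω) (hp1 : ∑ ω, p ω = 1)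
    (X : Ω → α) (Y : Ω → β) :
    entropy p (fun ω => (X ω, Y ω)) ≤ entropy p X + entropy p Y := by
  set r := probOf p (fun ω => (X ω, Y ω)) with hrdef
  have hr0 : ∀ z, 0 ≤ r z := fun z => probOf_nonneg p hp0 _ z
  have hx : ∀ z : α × β, r z ≤ probOf p X z.1 := by
    intro z
    rw [probOf_fst p X Y z.1]
    exact Finset.single_le_sum (fun y _ => hr0 (z.1, y)) (Finset.mem_univ z.2)
  have hy : ∀ z : α × β, r z ≤ probOf p Y z.2 := by
    intro z
    rw [probOf_snd p X Y z.2]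
    exact Finset.single_le_sum (fun x _ => hr0 (x, z.2)) (Finset.mem_univ z.1)
  have hg := gibbs (α := α × β) r (fun z => probOf p X z.1 * probOf p Y z.2)
    hr0 (fun z => mul_nonneg (probOf_nonneg p hp0 _ _) (probOf_nonneg p hp0 _ _))
    (sum_probOf p hp1 _)
    (by rw [Fintype.sum_prod_type, ← Finset.sum_mul_sum, sum_probOf p hp1 X,
          sum_probOf p hp1 Y, one_mul])
    (by
      intro z hz
      rcases mul_eq_zero.mp hz with h | h
      · exact le_antisymm (h ▸ hx z) (hr0 z)
      · exact le_antisymm (h ▸ hy z) (hr0 z))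
  have hsplit : ∑ z : α × β, r z * Real.logb 2 (probOf p X z.1 * probOf p Y z.2)
      = ∑ z : α × β, (r z * Real.logb 2 (probOf p X z.1)
          + r z * Real.logb 2 (probOf p Y z.2)) := by
    refine Finset.sum_congr rfl fun z _ => ?_
    rcases eq_or_lt_of_le (hr0 z) with h | h
    · simp [← h]
    · have h1 : probOf p X z.1 ≠ 0 := by
        have := lt_of_lt_of_le h (hx z); positivity
      have h2 : probOf p Y z.2 ≠ 0 := by
        have := lt_of_lt_of_le h (hy z); positivity
      rw [Real.logb_mul h1 h2, mul_add]
  rw [hsplit, Finset.sum_add_distrib] at hg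
  have e1 : ∑ z : α × β, r z * Real.logb 2 (probOf p X z.1)
      = ∑ x, probOf p X x * Real.logb 2 (probOf p X x) := by
    rw [Fintype.sum_prod_type]
    refine Finset.sum_congr rfl fun x _ => ?_
    show ∑ y, r (x, y) * Real.logb 2 (probOf p X x) = _
    rw [← Finset.sum_mul, ← probOf_fst]
  have e2 : ∑ z : α × β, r z * Real.logb 2 (probOf p Y z.2)
      = ∑ y, probOf p Y y * Real.logb 2 (probOf p Y y) := by
    rw [Fintype.sum_prod_type_right]
    refine Finset.sum_congr rfl fun y _ => ?_
    show ∑ x, r (x, y) * Real.logb 2 (probOf p Y y) = _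
    rw [← Finset.sum_mul, ← probOf_snd]
  rw [e1, e2] at hg
  unfold entropy
  linarith

lemma entropy_comp_inj (p : Ω → ℝ) (X : Ω → α) (f : α → β)
    (hf : Function.Injective f) :
    entropy p (fun ω => f (X ω)) = entropy p X := by
  unfold entropy
  congr 1
  have hval : ∀ a, probOf p (fun ω => f (X ω)) (f a) = probOf p X a := by
    intro a
    refine Finset.sum_congr rfl fun ω _ => ?_
    simp [hf.eq_iff]
  have hzero : ∀ b, b ∉ Finset.univ.image f → probOf p (fun ω => f (X ω)) b = 0 := by
    intro b hb
    refine Finset.sum_eq_zero fun ω _ => ?_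
    rw [if_neg]
    intro h
    exact hb (Finset.mem_image.mpr ⟨X ω, Finset.mem_univ _, h⟩)
  rw [← Finset.sum_subset (Finset.subset_univ (Finset.univ.image f))
    (fun b _ hb => by rw [hzero b hb]; simp),
    Finset.sum_image (fun a _ a' _ h => hf h)]
  exact Finset.sum_congr rfl fun a _ => by rw [hval]

end Aux

/-- In any (m,n) secret sharing scheme for a secret uniformly distributed over a
finite alphabet `W`, where any `m` shares reveal no information about the secret and
all `n` shares determine it, each share alphabet `S` satisfies
`log |S| ≥ log |W| / (n - m)`. -/


theorem secret_sharing_share_size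
    {Ω W S : Type*} [Fintype Ω] [Fintype W] [DecidableEq W] [Fintype S] [DecidableEq S]
    (p : Ω → ℝ) (hp0 : ∀ ω, 0 ≤ p ω) (hp1 : ∑ ω, p ω = 1)
    (n m : ℕ) (hmn : m < n)
    (secret : Ω → W) (shares : Fin n → Ω → S)
    (hunif : ∀ w, probOf p secret w = (Fintype.card W : ℝ)⁻¹)
    (hpriv : ∀ A : Finset (Fin n), A.card = m →
      mutualInfo p secret (fun ω => fun i : A => shares i ω) = 0)
    (hrec : condEntropy p secret (fun ω => fun i : Fin n => shares i ω) = 0) :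
    Real.logb 2 (Fintype.card S) ≥ Real.logb 2 (Fintype.card W) / ((n : ℝ) - m) := by
  classical
  have hOm : Nonempty Ω := by
    by_contra h
    rw [not_nonempty_iff] at h
    rw [Finset.univ_eq_empty, Finset.sum_empty] at hp1
    norm_num at hp1
  obtain ⟨ω0⟩ := hOm
  have hWpos : 0 < Fintype.card W := Fintype.card_pos_iff.mpr ⟨secret ω0⟩
  have hN : (Fintype.card W : ℝ) ≠ 0 := Nat.cast_ne_zero.mpr hWpos.ne'
  -- entropy of the uniform secret
  have hHW : entropy p secret = Real.logb 2 (Fintype.card W) := by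
    unfold entropy
    have hterm : ∀ w : W, probOf p secret w * Real.logb 2 (probOf p secret w)
        = (Fintype.card W : ℝ)⁻¹ * Real.logb 2 (Fintype.card W : ℝ)⁻¹ := by
      intro w; rw [hunif]
    rw [Finset.sum_congr rfl fun w _ => hterm w, Finset.sum_const, Finset.card_univ,
      nsmul_eq_mul, Real.logb_inv]
    field_simp
  -- choose a set A of m shares
  obtain ⟨A, -, hAcard⟩ := Finset.exists_subset_card_eq (s := (Finset.univ : Finset (Fin n))) (n := m)
    (by simpa using hmn.le)
  have hP := hpriv A hAcard
  simp only [mutualInfo, condEntropy] at hP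
  simp only [condEntropy] at hrec
  -- the recombination map
  set B : Finset (Fin n) := Aᶜ with hB
  let cmb : ((↥A → S) × (↥B → S)) → (Fin n → S) := fun z i =>
    if h : i ∈ A then z.1 ⟨i, h⟩ else z.2 ⟨i, Finset.mem_compl.mpr h⟩
  have hcmb_inj : Function.Injective cmb := by
    intro z z' h
    have h1 : z.1 = z'.1 := by
      funext i
      have hi := congrFun h (i : Fin n)
      simp only [cmb, dif_pos i.2] at hi
      exact hi
    have h2 : z.2 = z'.2 := by
      funext i
      have h3 : (i : Fin n) ∉ A := Finset.mem_compl.mp i.2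
      have hi := congrFun h (i : Fin n)
      simp only [cmb, dif_neg h3] at hi
      exact hi
    exact Prod.ext h1 h2
  have hcmb_eval : ∀ ω : Ω,
      cmb (fun i : A => shares i ω, fun i : B => shares i ω)
        = fun i : Fin n => shares i ω := by
    intro ω
    funext i
    by_cases h : i ∈ A <;> simp [cmb, h]
  -- the chain of (in)equalities
  have h2 : entropy p (fun ω => (secret ω, fun i : A => shares i ω)) ≤
      entropy p (fun ω => ((secret ω, fun i : A => shares i ω),
        fun i : B => shares i ω)) :=
    entropy_fst_le p hp0 _ _
  have hrc1 : entropy p (fun ω => ((secret ω, fun i : A => shares i ω),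
      fun i : B => shares i ω))
      = entropy p (fun ω => (secret ω, fun i : Fin n => shares i ω)) := by
    have h := entropy_comp_inj p
      (fun ω => ((secret ω, fun i : A => shares i ω), fun i : B => shares i ω))
      (fun z => (z.1.1, cmb (z.1.2, z.2)))
      (fun z z' hz => by
        have hz' : (z.1.1, cmb (z.1.2, z.2)) = (z'.1.1, cmb (z'.1.2, z'.2)) := hz
        simp only [Prod.mk.injEq] at hz'
        have e2 : (z.1.2, z.2) = (z'.1.2, z'.2) := hcmb_inj hz'.2
        simp only [Prod.mk.injEq] at e2
        exact Prod.ext (Prod.ext hz'.1 e2.1) e2.2)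
    rw [← h]
    refine congrArg (entropy p) (funext fun ω => ?_)
    show (secret ω, cmb (fun i : A => shares i ω, fun i : B => shares i ω)) = _
    rw [hcmb_eval ω]
  have hrc2 : entropy p (fun ω =>
      ((fun i : A => shares i ω : ↥A → S), (fun i : B => shares i ω : ↥B → S)))
      = entropy p (fun ω => fun i : Fin n => shares i ω) := by
    have h := entropy_comp_inj p
      (fun ω => ((fun i : A => shares i ω : ↥A → S), (fun i : B => shares i ω : ↥B → S)))
      cmb hcmb_inj
    rw [← h]
    exact congrArg (entropy p) (funext fun ω => hcmb_eval ω)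
  have h6 : entropy p (fun ω =>
      ((fun i : A => shares i ω : ↥A → S), (fun i : B => shares i ω : ↥B → S)))
      ≤ entropy p (fun ω => fun i : A => shares i ω)
        + entropy p (fun ω => fun i : B => shares i ω) :=
    entropy_pair_le_add p hp0 hp1 _ _
  have h7 : entropy p (fun ω => fun i : B => shares i ω)
      ≤ Real.logb 2 (Fintype.card (↥B → S)) :=
    entropy_le_logb_card p hp0 hp1 _
  have h8 : (Fintype.card (↥B → S) : ℝ) = (Fintype.card S : ℝ) ^ (n - m) := by
    rw [Fintype.card_fun, Fintype.card_coe, hB, Finset.card_compl, hAcard,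
      Fintype.card_fin]
    push_cast
    ring
  rw [h8, Real.logb_pow] at h7
  -- put it together
  have key : Real.logb 2 (Fintype.card W)
      ≤ ((n - m : ℕ) : ℝ) * Real.logb 2 (Fintype.card S) := by
    linarith [hP, hrec, h2, hrc1, hrc2, h6, h7, hHW]
  have hcast : ((n - m : ℕ) : ℝ) = (n : ℝ) - m := by
    rw [Nat.cast_sub hmn.le]
  have hnm : (0 : ℝ) < (n : ℝ) - m := by
    have : (m : ℝ) < n := Nat.cast_lt.mpr hmn
    linarith
  rw [ge_iff_le, div_le_iff₀ hnm]
  rw [hcast] at key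
  linarith
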